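/- Let 𝒜 be a finite set, A and J zero-one 𝒜 × 𝒜 matrices with AJ = JAᵀ and J^{2r} = I (J the permutation matrix of τ_J). Let X_A be the topological Markov shift defined by A and φ_{J,A}(x)_i = τ_J(x_{-i}) the induced reversal. Then for all m ≥ 1 and 0 ≤ l < r, the number of points x ∈ X_A with σ^m(φ_{J,A}^{2l}(x)) = x equals tr(J^{2l} A^m). -/

import Mathlib

open Matrix

/-- The shift map on `𝒜^ℤ`. -/
def shiftMap (𝒜 : Type*) : (ℤ → 𝒜) → (ℤ → 𝒜) := fun x i => x (i + 1)

/-- The one-block coordinate reversal induced by a symbol map `τ`. -/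
def revMap {𝒜 : Type*} (τ : 𝒜 → 𝒜) : (ℤ → 𝒜) → (ℤ → 𝒜) := fun x i => τ (x (-i))

section helpers
variable {𝒜 : Type*} [Fintype 𝒜] [DecidableEq 𝒜]

/-- Finset of `A`-admissible paths of length `m` from `a` to `b`. -/
def pathFS (A : Matrix 𝒜 𝒜 ℤ) (m : ℕ) (a b : 𝒜) : Finset (Fin (m + 1) → 𝒜) :=
  Finset.univ.filter fun p => p 0 = a ∧ p (Fin.last m) = b ∧
    ∀ i : Fin m, A (p i.castSucc) (p i.succ) = 1

lemma mem_pathFS {A : Matrix 𝒜 𝒜 ℤ} {m : ℕ} {a b : 𝒜} {p : Fin (m + 1) → 𝒜} :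
    p ∈ pathFS A m a b ↔ p 0 = a ∧ p (Fin.last m) = b ∧
      ∀ i : Fin m, A (p i.castSucc) (p i.succ) = 1 := by
  simp [pathFS]

lemma pow_apply_eq_card (A : Matrix 𝒜 𝒜 ℤ) (hA01 : ∀ a b, A a b = 0 ∨ A a b = 1) :
    ∀ (m : ℕ) (a b : 𝒜), (A ^ m) a b = ((pathFS A m a b).card : ℤ) := by
  intro m
  induction m with
  | zero =>
    intro a b
    by_cases hab : a = b
    · subst hab
      rw [pow_zero, Matrix.one_apply_eq]
      have h : pathFS A 0 a a = {fun _ => a} := by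
        ext p
        rw [mem_pathFS, Finset.mem_singleton]
        constructor
        · rintro ⟨h1, -, -⟩
          funext i
          rw [Fin.fin_one_eq_zero i, h1]
        · rintro rfl; exact ⟨rfl, rfl, fun i => i.elim0⟩
      rw [h]; simp
    · rw [pow_zero, Matrix.one_apply_ne hab]
      have h : pathFS A 0 a b = ∅ := by
        rw [Finset.eq_empty_iff_forall_notMem]
        intro p hp
        rw [mem_pathFS] at hp
        exact hab (hp.1 ▸ hp.2.1 ▸ rfl)
      rw [h]; simp
  | succ n ih =>
    intro a b
    rw [pow_succ, Matrix.mul_apply]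
    have key : ∀ c, (A ^ n) a c * A c b = if A c b = 1 then (A ^ n) a c else 0 := by
      intro c
      rcases hA01 c b with h | h <;> simp [h]
    rw [Finset.sum_congr rfl fun c _ => key c]
    have hcard : (pathFS A (n + 1) a b).card
        = ∑ c : 𝒜, (Finset.filter (fun p => p (Fin.last n).castSucc = c)
            (pathFS A (n + 1) a b)).card :=
      Finset.card_eq_sum_card_fiberwise fun p _ => Finset.mem_univ _
    have hfib : ∀ c, (Finset.filter (fun p => p (Fin.last n).castSucc = c)
        (pathFS A (n + 1) a b)).card
        = if A c b = 1 then (pathFS A n a c).card else 0 := by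
      intro c
      by_cases hcb : A c b = 1
      · rw [if_pos hcb]
        refine Finset.card_bij' (fun p _ => fun i : Fin (n + 1) => p i.castSucc)
          (fun q _ => Fin.snoc q b) ?_ ?_ ?_ ?_
        · intro p hp
          simp only [Finset.mem_filter, mem_pathFS] at hp
          obtain ⟨⟨h0, hlast, hedge⟩, hc⟩ := hp
          rw [mem_pathFS]
          refine ⟨?_, hc, ?_⟩
          · rwa [show ((0 : Fin (n+1)).castSucc) = 0 from rfl]
          · intro i
            rw [← Fin.succ_castSucc]
            exact hedge i.castSucc
        · intro q hq
          rw [mem_pathFS] at hq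
          obtain ⟨h0, hlast, hedge⟩ := hq
          simp only [Finset.mem_filter, mem_pathFS, Finset.mem_univ, true_and]
          refine ⟨⟨?_, ?_, ?_⟩, ?_⟩
          · rw [show ((0 : Fin (n+2))) = ((0 : Fin (n+1)).castSucc) from rfl,
              Fin.snoc_castSucc]
            exact h0
          · rw [Fin.snoc_last]
          · intro i
            refine Fin.lastCases ?_ ?_ i
            · rw [Fin.snoc_castSucc, Fin.succ_last, Fin.snoc_last, hlast]
              exact hcb
            · intro j
              rw [Fin.succ_castSucc, Fin.snoc_castSucc, Fin.snoc_castSucc]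
              exact hedge j
          · rw [Fin.snoc_castSucc]; exact hlast
        · intro p hp
          simp only [Finset.mem_filter, mem_pathFS] at hp
          funext i
          refine Fin.lastCases ?_ ?_ i
          · rw [Fin.snoc_last]; exact hp.1.2.1.symm
          · intro j; rw [Fin.snoc_castSucc]
        · intro q hq
          funext i
          rw [Fin.snoc_castSucc]
      · rw [if_neg hcb, Finset.card_eq_zero, Finset.eq_empty_iff_forall_notMem]
        intro p hp
        simp only [Finset.mem_filter, mem_pathFS] at hp
        obtain ⟨⟨-, hlast, hedge⟩, hc⟩ := hp
        have := hedge (Fin.last n)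
        rw [Fin.succ_last, hlast, hc] at this
        exact hcb this
    rw [hcard, Nat.cast_sum]
    refine Finset.sum_congr rfl fun c _ => ?_
    rw [hfib c]
    split_ifs with h
    · exact ih a c
    · simp

lemma Jpow (J : Matrix 𝒜 𝒜 ℤ) (τ : Equiv.Perm 𝒜)
    (hJ : ∀ a b, J a b = if τ a = b then 1 else 0) :
    ∀ (k : ℕ) (a b : 𝒜), (J ^ k) a b = if (τ ^ k) a = b then 1 else 0 := by
  intro k
  induction k with
  | zero => intro a b; simp [Matrix.one_apply]
  | succ n ih =>
    intro a b
    rw [pow_succ, Matrix.mul_apply]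
    simp only [ih, hJ, ite_mul, one_mul, zero_mul]
    rw [Finset.sum_ite_eq]
    simp [pow_succ', Equiv.Perm.mul_apply]

lemma shift_iter (k : ℕ) (x : ℤ → 𝒜) (i : ℤ) :
    (shiftMap 𝒜)^[k] x i = x (i + k) := by
  induction k generalizing x i with
  | zero => simp
  | succ n ih =>
    rw [Function.iterate_succ_apply, ih (shiftMap 𝒜 x) i]
    show x (i + n + 1) = x (i + (n + 1 : ℕ))
    congr 1
    push_cast
    ring

lemma rev_iter (τ : Equiv.Perm 𝒜) (k : ℕ) (x : ℤ → 𝒜) (i : ℤ) :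
    (revMap ⇑τ)^[2 * k] x i = (⇑τ)^[2 * k] (x i) := by
  induction k generalizing x i with
  | zero => simp
  | succ n ih =>
    have h2 : 2 * (n + 1) = 2 * n + 2 := by ring
    rw [h2, Function.iterate_add_apply, ih]
    have h : (revMap ⇑τ)^[2] x i = τ (τ (x i)) := by
      show revMap ⇑τ (revMap ⇑τ x) i = _
      simp [revMap]
    rw [h, Function.iterate_add_apply]
    rfl

/-- extension of a window to a (twisted-)periodic biinfinite sequence -/
def extSeq (π : Equiv.Perm 𝒜) (m : ℕ) (hm : 1 ≤ m) (p : Fin (m + 1) → 𝒜) : ℤ → 𝒜 :=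
  fun i => (π ^ (-(i / (m : ℤ)))) (p ⟨(i % (m : ℤ)).toNat, by
    have hm' : (0 : ℤ) < (m : ℤ) := by exact_mod_cast hm
    have h0 : 0 ≤ i % (m : ℤ) := Int.emod_nonneg i (by omega)
    have h1 : i % (m : ℤ) < m := Int.emod_lt_of_pos i hm'
    omega⟩)

lemma extSeq_spec (π : Equiv.Perm 𝒜) (m : ℕ) (hm : 1 ≤ m) (p : Fin (m + 1) → 𝒜)
    (i q rn : ℤ) (h : i = (m : ℤ) * q + rn) (h0 : 0 ≤ rn) (h1 : rn < m)
    (j : Fin (m + 1)) (hj : (j : ℤ) = rn) :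
    extSeq π m hm p i = (π ^ (-q)) (p j) := by
  have hm' : (0 : ℤ) < (m : ℤ) := by exact_mod_cast hm
  have huniq : i / (m : ℤ) = q ∧ i % (m : ℤ) = rn :=
    (Int.ediv_emod_unique hm').mpr ⟨by omega, h0, h1⟩
  obtain ⟨hq, hr⟩ := huniq
  unfold extSeq
  rw [hq]
  congr 1
  congr 1
  apply Fin.ext
  show (i % (m : ℤ)).toNat = j.val
  omega

end helpers

/-- Theorem B: for a topological Markov shift `X_A` with reversal
`φ_{J,A}` induced by the permutation matrix `J` of `τ` (with `AJ = JAᵀ`, `J^{2r} = I`),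
the number of points fixed by `σ^m ∘ φ_{J,A}^{2l}` equals `tr(J^{2l} A^m)`. -/
theorem fixed_points_eq_trace {𝒜 : Type*} [Fintype 𝒜] [DecidableEq 𝒜]
    (A J : Matrix 𝒜 𝒜 ℤ) (τ : Equiv.Perm 𝒜) (r : ℕ) (hr : 1 ≤ r)
    (hA01 : ∀ a b, A a b = 0 ∨ A a b = 1)
    (hJ : ∀ a b, J a b = if τ a = b then 1 else 0)
    (hAJ : A * J = J * Aᵀ) (hJr : J ^ (2 * r) = 1)
    (m l : ℕ) (hm : 1 ≤ m) (hl : l < r) :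
    (({x : ℤ → 𝒜 | (∀ i, A (x i) (x (i + 1)) = 1) ∧
        (shiftMap 𝒜)^[m] ((revMap ⇑τ)^[2 * l] x) = x}).ncard : ℤ) =
      Matrix.trace (J ^ (2 * l) * A ^ m) := by
  have hm' : (0 : ℤ) < (m : ℤ) := by exact_mod_cast hm
  set π : Equiv.Perm 𝒜 := τ ^ (2 * l) with hπ
  -- key matrix relation
  have key : ∀ a b, A a (τ⁻¹ b) = A b (τ a) := by
    intro a b
    have h : (A * J) a b = (J * Aᵀ) a b := by rw [hAJ]
    have hL : (A * J) a b = A a (τ⁻¹ b) := by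
      rw [Matrix.mul_apply, Finset.sum_eq_single (τ⁻¹ b)]
      · rw [hJ]; simp
      · intro c _ hc
        rw [hJ, if_neg, mul_zero]
        intro hcc
        exact hc (by rw [← hcc]; simp)
      · intro hmem; exact absurd (Finset.mem_univ _) hmem
    have hR : (J * Aᵀ) a b = A b (τ a) := by
      rw [Matrix.mul_apply, Finset.sum_eq_single (τ a)]
      · rw [hJ, if_pos rfl, one_mul, Matrix.transpose_apply]
      · intro c _ hc
        rw [hJ, if_neg (fun hcc => hc hcc.symm), zero_mul]
      · intro hmem; exact absurd (Finset.mem_univ _) hmem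
    rw [← hL, h, hR]
  have hrev : ∀ a b, A a b = A (τ b) (τ a) := by
    intro a b
    have h := key a (τ b)
    simpa using h
  have hτ2 : ∀ a b, A ((τ ^ 2) a) ((τ ^ 2) b) = A a b := by
    intro a b
    have h1 := hrev a b
    have h2 := hrev (τ b) (τ a)
    rw [pow_two, Equiv.Perm.mul_apply, Equiv.Perm.mul_apply, ← h2, ← h1]
  have hpown : ∀ (n : ℕ) (a b : 𝒜), A (((τ ^ 2) ^ n) a) (((τ ^ 2) ^ n) b) = A a b := by
    intro n
    induction n with
    | zero => intro a b; simp
    | succ k ih =>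
      intro a b
      rw [pow_succ, Equiv.Perm.mul_apply, Equiv.Perm.mul_apply, ih, hτ2]
  have hπ1 : ∀ a b, A (π a) (π b) = A a b := by
    intro a b
    have hpm : π = (τ ^ 2) ^ l := by rw [hπ, ← pow_mul]
    rw [hpm]
    exact hpown l a b
  have hπinv : ∀ a b, A (π⁻¹ a) (π⁻¹ b) = A a b := by
    intro a b
    rw [← hπ1 (π⁻¹ a) (π⁻¹ b)]
    simp
  have hπz : ∀ (k : ℤ) (a b : 𝒜), A ((π ^ k) a) ((π ^ k) b) = A a b := by
    intro k
    induction k using Int.induction_on with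
    | zero => intro a b; simp
    | succ k ih =>
      intro a b
      rw [_root_.zpow_add_one, Equiv.Perm.mul_apply, Equiv.Perm.mul_apply, ih, hπ1]
    | pred k ih =>
      intro a b
      rw [_root_.zpow_sub_one, Equiv.Perm.mul_apply, Equiv.Perm.mul_apply, ih, hπinv]
  -- membership characterization
  have hval : ∀ (x : ℤ → 𝒜) (i : ℤ),
      (shiftMap 𝒜)^[m] ((revMap ⇑τ)^[2 * l] x) i = π (x (i + m)) := by
    intro x i
    rw [shift_iter, rev_iter, hπ]
    rfl
  have hmem : ∀ x : ℤ → 𝒜,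
      (x ∈ {x : ℤ → 𝒜 | (∀ i, A (x i) (x (i + 1)) = 1) ∧
        (shiftMap 𝒜)^[m] ((revMap ⇑τ)^[2 * l] x) = x}) ↔
      ((∀ i, A (x i) (x (i + 1)) = 1) ∧ ∀ i : ℤ, x (i + m) = π⁻¹ (x i)) := by
    intro x
    simp only [Set.mem_setOf_eq]
    apply and_congr Iff.rfl
    rw [funext_iff]
    constructor
    · intro h i
      have h2 := h i
      rw [hval] at h2
      rw [← h2]
      simp
    · intro h i
      rw [hval, h i]
      simp
  -- twisted periodicity
  have hperk : ∀ (x : ℤ → 𝒜), (∀ i : ℤ, x (i + m) = π⁻¹ (x i)) →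
      ∀ (k : ℤ) (i : ℤ), x (i + k * m) = (π ^ k)⁻¹ (x i) := by
    intro x hx k
    induction k using Int.induction_on with
    | zero => intro i; simp
    | succ k ih =>
      intro i
      have e1 : i + ((k : ℤ) + 1) * m = (i + k * m) + m := by ring
      rw [e1, hx, ih]
      rw [← Equiv.Perm.mul_apply]
      have hg : π⁻¹ * (π ^ (k : ℤ))⁻¹ = (π ^ ((k : ℤ) + 1))⁻¹ := by group
      rw [hg]
    | pred k ih =>
      intro i
      have e1 : (i + (-(k : ℤ) - 1) * m) + m = i + (-(k : ℤ)) * m := by ring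
      have h1 := hx (i + (-(k : ℤ) - 1) * m)
      rw [e1, ih] at h1
      have h2 := congrArg π h1
      rw [show ∀ y, π (π⁻¹ y) = y from fun y => π.apply_symm_apply y] at h2
      rw [← h2, ← Equiv.Perm.mul_apply]
      have hg : π * (π ^ (-(k : ℤ)))⁻¹ = (π ^ (-(k : ℤ) - 1))⁻¹ := by group
      rw [hg]
  -- the window Finset
  set S : Finset (Fin (m + 1) → 𝒜) := Finset.univ.filter
    (fun p => (∀ i : Fin m, A (p i.castSucc) (p i.succ) = 1) ∧
      p (Fin.last m) = π⁻¹ (p 0)) with hS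
  have hEval0 : ∀ (p : Fin (m + 1) → 𝒜) (j : Fin (m + 1)), (j : ℤ) < m →
      extSeq π m hm p (j : ℤ) = p j := by
    intro p j hj
    have h := extSeq_spec π m hm p (j : ℤ) 0 (j : ℤ) (by ring)
      (by positivity) hj j rfl
    simpa using h
  have himage : {x : ℤ → 𝒜 | (∀ i, A (x i) (x (i + 1)) = 1) ∧
        (shiftMap 𝒜)^[m] ((revMap ⇑τ)^[2 * l] x) = x}
      = extSeq π m hm '' (S : Set (Fin (m + 1) → 𝒜)) := by
    ext x
    rw [hmem x]
    constructor
    · rintro ⟨h1, h2⟩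
      refine ⟨fun j => x ((j.val : ℕ) : ℤ), ?_, ?_⟩
      · rw [Finset.mem_coe, hS, Finset.mem_filter]
        refine ⟨Finset.mem_univ _, ?_, ?_⟩
        · intro i
          have h := h1 ((i.val : ℕ) : ℤ)
          dsimp only
          have e1 : (((i.castSucc.val : ℕ)) : ℤ) = ((i.val : ℕ) : ℤ) := by
            simp [Fin.coe_castSucc]
          have e2 : (((i.succ.val : ℕ)) : ℤ) = ((i.val : ℕ) : ℤ) + 1 := by
            push_cast [Fin.val_succ]
            ring
          rw [e1, e2]
          exact h
        · dsimp only
          have h := h2 0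
          rw [zero_add] at h
          simpa using h
      · funext i
        have h0r : 0 ≤ i % (m : ℤ) := Int.emod_nonneg i (by omega)
        have h1r : i % (m : ℤ) < m := Int.emod_lt_of_pos i hm'
        have hq := extSeq_spec π m hm (fun j => x ((j.val : ℕ) : ℤ)) i
          (i / (m : ℤ)) (i % (m : ℤ)) (Int.mul_ediv_add_emod i (m : ℤ)).symm h0r h1r
          ⟨(i % (m : ℤ)).toNat, by omega⟩ (by simp [Int.toNat_of_nonneg h0r])
        rw [hq]
        dsimp only
        have e3 : (((i % (m : ℤ)).toNat : ℕ) : ℤ) = i % (m : ℤ) :=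
          Int.toNat_of_nonneg h0r
        rw [e3]
        have hp := hperk x h2 (i / (m : ℤ)) (i % (m : ℤ))
        have e4 : i % (m : ℤ) + (i / (m : ℤ)) * m = i := by
          rw [mul_comm]; exact Int.emod_add_mul_ediv i (m : ℤ)
        rw [e4] at hp
        rw [_root_.zpow_neg, hp]
    · rintro ⟨p, hpS, rfl⟩
      rw [Finset.mem_coe, hS, Finset.mem_filter] at hpS
      obtain ⟨-, hedge, hlast⟩ := hpS
      have hibase : ∀ i : ℤ, 0 ≤ i % (m : ℤ) ∧ i % (m : ℤ) < m ∧
          i = (m : ℤ) * (i / (m : ℤ)) + i % (m : ℤ) :=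
        fun i => ⟨Int.emod_nonneg i (by omega), Int.emod_lt_of_pos i hm',
          (Int.mul_ediv_add_emod i (m : ℤ)).symm⟩
      constructor
      · intro i
        obtain ⟨h0r, h1r, hi⟩ := hibase i
        set j : Fin m := ⟨(i % (m : ℤ)).toNat, by omega⟩ with hj
        have hjc : ((j.castSucc : Fin (m + 1)) : ℤ) = i % (m : ℤ) := by
          simp [hj, Fin.coe_castSucc, Int.toNat_of_nonneg h0r]
        have e1 := extSeq_spec π m hm p i (i / (m : ℤ)) (i % (m : ℤ)) hi h0r h1r
          j.castSucc hjc
        by_cases hcase : i % (m : ℤ) + 1 < (m : ℤ)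
        · have hjs : ((j.succ : Fin (m + 1)) : ℤ) = i % (m : ℤ) + 1 := by
            simp [hj, Fin.val_succ]
            omega
          have e2 := extSeq_spec π m hm p (i + 1) (i / (m : ℤ)) (i % (m : ℤ) + 1)
            (by omega) (by omega) hcase j.succ hjs
          rw [e1, e2, hπz]
          exact hedge j
        · have e2 := extSeq_spec π m hm p (i + 1) (i / (m : ℤ) + 1) 0
            (by rw [mul_add, mul_one]; omega) le_rfl hm' 0 (by simp)
          rw [e1, e2]
          have hsplit : (π ^ (-(i / (m : ℤ) + 1))) (p 0)
              = (π ^ (-(i / (m : ℤ)))) (π⁻¹ (p 0)) := by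
            rw [← Equiv.Perm.mul_apply]
            have hg : (π : Equiv.Perm 𝒜) ^ (-(i / (m : ℤ) + 1))
                = π ^ (-(i / (m : ℤ))) * π⁻¹ := by group
            rw [hg]
          rw [hsplit, hπz, ← hlast]
          have hsucc : j.succ = Fin.last m := by
            apply Fin.ext
            simp [hj, Fin.val_succ, Fin.val_last]
            omega
          rw [← hsucc]
          exact hedge j
      · intro i
        obtain ⟨h0r, h1r, hi⟩ := hibase i
        set j : Fin (m + 1) := ⟨(i % (m : ℤ)).toNat, by omega⟩ with hj
        have hjc : ((j : Fin (m + 1)) : ℤ) = i % (m : ℤ) := by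
          simp [hj, Int.toNat_of_nonneg h0r]
        have e1 := extSeq_spec π m hm p i (i / (m : ℤ)) (i % (m : ℤ)) hi h0r h1r j hjc
        have e2 := extSeq_spec π m hm p (i + m) (i / (m : ℤ) + 1) (i % (m : ℤ))
          (by rw [mul_add, mul_one]; omega) h0r h1r j hjc
        rw [e1, e2]
        have hg : (π : Equiv.Perm 𝒜) ^ (-(i / (m : ℤ) + 1))
            = π⁻¹ * π ^ (-(i / (m : ℤ))) := by group
        rw [hg, Equiv.Perm.mul_apply]
  -- injectivity
  have hinj : Set.InjOn (extSeq π m hm) (S : Set (Fin (m + 1) → 𝒜)) := by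
    intro p hp p' hp' hE
    rw [Finset.mem_coe, hS, Finset.mem_filter] at hp hp'
    have h0m : (((0 : Fin (m + 1)) : ℕ) : ℤ) < m := by
      simp
      omega
    have h0eq : p 0 = p' 0 := by
      have h := congrFun hE (((0 : Fin (m + 1)) : ℕ) : ℤ)
      rwa [hEval0 p 0 h0m, hEval0 p' 0 h0m] at h
    funext j
    by_cases hjlt : ((j : ℕ) : ℤ) < m
    · have h := congrFun hE ((j : ℕ) : ℤ)
      rwa [hEval0 p j hjlt, hEval0 p' j hjlt] at h
    · have hjl : j = Fin.last m := by
        apply Fin.ext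
        have := j.isLt
        simp [Fin.val_last]
        omega
      rw [hjl, hp.2.2, hp'.2.2, h0eq]
  rw [himage, Set.ncard_image_of_injOn hinj, Set.ncard_coe_finset]
  -- cardinality of S via path counting
  have hfiber : S.card = ∑ b : 𝒜, (pathFS A m b (π⁻¹ b)).card := by
    rw [Finset.card_eq_sum_card_fiberwise
      (f := fun p => p 0) (t := Finset.univ) (fun p _ => Finset.mem_univ _)]
    refine Finset.sum_congr rfl fun b _ => ?_
    congr 1
    ext p
    simp only [hS, Finset.mem_filter, mem_pathFS, Finset.mem_univ, true_and]
    constructor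
    · rintro ⟨⟨hedge, hlast⟩, h0⟩
      exact ⟨h0, by rw [hlast, h0], hedge⟩
    · rintro ⟨h0, hlast, hedge⟩
      exact ⟨⟨hedge, by rw [hlast, h0]⟩, h0⟩
  -- trace computation
  have hdiag : ∀ a, (J ^ (2 * l) * A ^ m) a a = (A ^ m) (π a) a := by
    intro a
    rw [Matrix.mul_apply, Finset.sum_eq_single (π a)]
    · rw [Jpow J τ hJ, hπ, if_pos rfl, one_mul]
    · intro c _ hc
      rw [Jpow J τ hJ, if_neg (fun hcc => hc (by rw [← hcc, hπ])), zero_mul]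
    · intro hmem2; exact absurd (Finset.mem_univ _) hmem2
  rw [Matrix.trace]
  simp only [Matrix.diag]
  rw [Finset.sum_congr rfl fun a _ => hdiag a]
  have hsum : ∑ a : 𝒜, (A ^ m) (π a) a = ∑ b : 𝒜, (A ^ m) b (π⁻¹ b) := by
    have := Equiv.sum_comp π (fun b => (A ^ m) b (π⁻¹ b))
    rw [← this]
    refine Finset.sum_congr rfl fun a _ => ?_
    simp
  rw [hsum, hfiber]
  push_cast
  refine Finset.sum_congr rfl fun b _ => ?_
  exact (pow_apply_eq_card A hA01 m b (π⁻¹ b)).symm
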